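/- If p is a prime power with p ≥ 2, then H(p−1, p) ≤ p² − 1; that is, there exist p−1 pairwise disjoint p-element Golomb rulers contained in {1, 2, ..., p²−1}. (Theorem 4, third part.) -/

import Mathlib

/-- A finite set of naturals is a Golomb ruler if all differences of pairs of
distinct elements are distinct. -/
def IsGolomb (S : Finset ℕ) : Prop :=
  ∀ a ∈ S, ∀ b ∈ S, ∀ c ∈ S, ∀ d ∈ S, a ≠ b → c ≠ d →
    (a : ℤ) - (b : ℤ) = (c : ℤ) - (d : ℤ) → a = c ∧ b = d

/-- `A` contains `I` pairwise disjoint `J`-element Golomb rulers. -/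
def ContainsDGR (I J : ℕ) (A : Finset ℕ) : Prop :=
  ∃ f : Fin I → Finset ℕ,
    (∀ i, (f i).card = J ∧ f i ⊆ A ∧ IsGolomb (f i)) ∧
    ∀ i j, i ≠ j → Disjoint (f i) (f j)

/-- There is an `(I,J,n)`-DGR: `I` pairwise disjoint `J`-element Golomb rulers,
each a subset of `{1, 2, ..., n}`. -/
def HasDGR (I J n : ℕ) : Prop := ContainsDGR I J (Finset.Icc 1 n)

/-- `H I J` is the least positive `n` such that an `(I,J,n)`-DGR exists. -/
noncomputable def H (I J : ℕ) : ℕ := sInf {n : ℕ | 0 < n ∧ HasDGR I J n}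
open Polynomial in
theorem key_construction (p0 m : ℕ) (hp0 : p0.Prime) (hm : 0 < m) :
    HasDGR (p0 ^ m - 1) (p0 ^ m) ((p0 ^ m) ^ 2 - 1) := by
  classical
  haveI : Fact p0.Prime := ⟨hp0⟩
  set q : ℕ := p0 ^ m with hq
  have hq2 : 2 ≤ q := Nat.one_lt_pow hm.ne' hp0.one_lt
  have hq2sq : 4 ≤ q ^ 2 := by
    calc (4:ℕ) = 2 ^ 2 := by norm_num
    _ ≤ q ^ 2 := Nat.pow_le_pow_left hq2 2
  have hqq : q < q ^ 2 := by nlinarith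
  set F := GaloisField p0 (2 * m) with hF
  haveI : Fintype F := Fintype.ofFinite F
  letI : Field F := inferInstanceAs (Field (GaloisField p0 (2 * m)))
  have hcardF : Fintype.card F = q ^ 2 := by
    have h := GaloisField.card p0 (2 * m) (by omega)
    rw [Nat.card_eq_fintype_card] at h
    rw [h, hq, ← pow_mul, mul_comm]
  obtain ⟨ζ, hζ⟩ := IsCyclic.exists_generator (α := Fˣ)
  set N : ℕ := q ^ 2 - 1 with hN
  have hNpos : 0 < N := by omega
  have hordζ : orderOf ζ = N := by
    rw [orderOf_eq_card_of_forall_mem_zpowers hζ, Nat.card_eq_fintype_card,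
      Fintype.card_units, hcardF]
  have hζne : (ζ : F) ≠ 0 := Units.ne_zero ζ
  -- the discrete logarithm, valued in [1, N]
  have hex : ∀ x : F, x ≠ 0 → ∃ a, (1 ≤ a ∧ a ≤ N) ∧ (ζ : F) ^ a = x := by
    intro x hx
    obtain ⟨k, hk⟩ := mem_powers_iff_mem_zpowers.mpr (hζ (Units.mk0 x hx))
    have hkF : (ζ : F) ^ k = x := by
      have := congrArg Units.val hk
      simpa using this
    rcases eq_or_ne (k % N) 0 with h0 | h0
    · refine ⟨N, ⟨hNpos, le_refl N⟩, ?_⟩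
      have h1 : (ζ : F) ^ (k % N) = (ζ : F) ^ k := by
        have := pow_mod_orderOf ζ k
        rw [hordζ] at this
        have := congrArg Units.val this
        simpa using this
      have hx1 : x = 1 := by rw [← hkF, ← h1, h0, pow_zero]
      have : (ζ : F) ^ N = 1 := by
        have := pow_orderOf_eq_one ζ
        rw [hordζ] at this
        have := congrArg Units.val this
        simpa using this
      rw [this, hx1]
    · refine ⟨k % N, ⟨by omega, le_of_lt (Nat.mod_lt _ hNpos)⟩, ?_⟩
      have h1 : (ζ : F) ^ (k % N) = (ζ : F) ^ k := by
        have := pow_mod_orderOf ζ k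
        rw [hordζ] at this
        have := congrArg Units.val this
        simpa using this
      rw [h1, hkF]
  let L : F → ℕ := fun x =>
    if h : ∃ a, (1 ≤ a ∧ a ≤ N) ∧ (ζ : F) ^ a = x then Nat.find h else 0
  have hLspec : ∀ x : F, x ≠ 0 → (1 ≤ L x ∧ L x ≤ N) ∧ (ζ : F) ^ (L x) = x := by
    intro x hx
    have hexx := hex x hx
    simp only [L, dif_pos hexx]
    exact Nat.find_spec hexx
  have hLinj : ∀ x y : F, x ≠ 0 → y ≠ 0 → L x = L y → x = y := by
    intro x y hx hy h
    rw [← (hLspec x hx).2, ← (hLspec y hy).2, h]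
  have hLmul : ∀ x y z w : F, x ≠ 0 → y ≠ 0 → z ≠ 0 → w ≠ 0 →
      (L x : ℤ) - L y = (L z : ℤ) - L w → x * w = y * z := by
    intro x y z w hx hy hz hw h
    have hnat : L x + L w = L y + L z := by omega
    have h2 : (ζ : F) ^ (L x + L w) = (ζ : F) ^ (L y + L z) := by rw [hnat]
    rw [pow_add, pow_add, (hLspec x hx).2, (hLspec y hy).2, (hLspec z hz).2,
      (hLspec w hw).2] at h2
    exact h2
  -- the subfield of size q
  let K : Subfield F := (iterateFrobenius F p0 m).eqLocusField (RingHom.id F)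
  have hmemK : ∀ x : F, x ∈ K ↔ x ^ q = x := by
    intro x
    show iterateFrobenius F p0 m x = RingHom.id F x ↔ _
    rw [iterateFrobenius_def, RingHom.id_apply, hq]
  have hζK : (ζ : F) ∉ K := by
    intro hK
    rw [hmemK] at hK
    have h1 : (ζ : F) ^ (q - 1) * (ζ : F) = (ζ : F) := by
      rw [← pow_succ, show q - 1 + 1 = q by omega, hK]
    have h2 : (ζ : F) ^ (q - 1) = 1 := by
      have := mul_right_cancel₀ hζne (h1.trans (one_mul (ζ : F)).symm)
      exact this
    have h3 : ζ ^ (q - 1) = 1 := by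
      ext
      rw [Units.val_pow_eq_pow_val, h2, Units.val_one]
    have h4 := orderOf_dvd_of_pow_eq_one h3
    rw [hordζ] at h4
    have := Nat.le_of_dvd (by omega) h4
    omega
  have hindep : ∀ s t s' t' : F, s ∈ K → t ∈ K → s' ∈ K → t' ∈ K →
      s * ζ + t = s' * ζ + t' → s = s' ∧ t = t' := by
    intro s t s' t' hs ht hs' ht' h
    by_cases hss : s = s'
    · refine ⟨hss, ?_⟩
      rw [hss] at h
      exact add_left_cancel h
    · exfalso
      apply hζK
      have hss0 : s - s' ≠ 0 := sub_ne_zero.mpr hss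
      have : (ζ : F) = (t' - t) * (s - s')⁻¹ := by
        field_simp
        linear_combination h
      rw [this]
      exact K.mul_mem (K.sub_mem ht' ht) (K.inv_mem (K.sub_mem hs hs'))
  let Kfin : Finset F := Finset.univ.filter (· ∈ K)
  have hmemKfin : ∀ x : F, x ∈ Kfin ↔ x ∈ K := by
    intro x; simp [Kfin]
  -- cardinality of K
  have hfac : (q - 1) * (q + 1) + 1 = q ^ 2 := by
    have h : ∀ r : ℕ, (r + 1 - 1) * (r + 1 + 1) + 1 = (r + 1) ^ 2 := by
      intro r
      simp only [Nat.add_sub_cancel]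
      ring
    have h2 := h (q - 1)
    rw [show q - 1 + 1 = q by omega] at h2
    exact h2
  have hordξ : orderOf (ζ ^ (q + 1)) = q - 1 := by
    rw [orderOf_pow, hordζ]
    have hNf : N = (q - 1) * (q + 1) := by omega
    rw [hNf, Nat.gcd_mul_left_left, Nat.mul_div_cancel _ (by omega)]
  have hprim : IsPrimitiveRoot ((ζ ^ (q + 1) : Fˣ) : F) (q - 1) := by
    rw [IsPrimitiveRoot.coe_units_iff, ← hordξ]
    exact IsPrimitiveRoot.orderOf _
  have h0nth : (0 : F) ∉ nthRootsFinset (q - 1) (1 : F) := by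
    intro h0
    rw [mem_nthRootsFinset (by omega)] at h0
    rw [zero_pow (by omega : q - 1 ≠ 0)] at h0
    exact zero_ne_one h0
  have hcardKfin : Kfin.card = q := by
    have hins : Kfin = insert (0 : F) (nthRootsFinset (q - 1) (1 : F)) := by
      ext x
      rw [hmemKfin, hmemK, Finset.mem_insert, mem_nthRootsFinset (by omega : 0 < q - 1)]
      constructor
      · intro hxq
        by_cases hx0 : x = 0
        · exact Or.inl hx0
        · refine Or.inr (mul_right_cancel₀ hx0 ?_)
          rw [← pow_succ, show q - 1 + 1 = q by omega, hxq, one_mul]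
      · rintro (rfl | hx1)
        · exact zero_pow (by omega)
        · calc x ^ q = x ^ (q - 1) * x := by rw [← pow_succ, show q - 1 + 1 = q by omega]
          _ = x := by rw [hx1, one_mul]
    rw [hins, Finset.card_insert_of_notMem h0nth, hprim.card_nthRootsFinset]
    omega
  let Kstar : Finset F := Kfin.erase 0
  have hcardKstar : Kstar.card = q - 1 := by
    rw [Finset.card_erase_of_mem, hcardKfin]
    rw [hmemKfin, hmemK]
    exact zero_pow (by omega)
  let e := Kstar.equivFinOfCardEq hcardKstar
  let g : Fin (q - 1) → F := fun i => (e.symm i : F)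
  have hgK : ∀ i, g i ∈ K ∧ g i ≠ 0 := by
    intro i
    have h := (e.symm i).2
    have h2 := Finset.mem_erase.mp h
    exact ⟨(hmemKfin _).mp h2.2, h2.1⟩
  have hginj : Function.Injective g := by
    intro i j h
    exact e.symm.injective (Subtype.ext h)
  have hζc : ∀ c : F, c ∈ K → (ζ : F) + c ≠ 0 := by
    intro c hc h0
    apply hζK
    have : (ζ : F) = -c := eq_neg_of_add_eq_zero_left h0
    rw [this]
    exact K.neg_mem hc
  have helt : ∀ (i : Fin (q - 1)) (c : F), c ∈ K → g i * ((ζ : F) + c) ≠ 0 := by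
    intro i c hc
    exact mul_ne_zero (hgK i).2 (hζc c hc)
  have heltinj : ∀ (i j : Fin (q - 1)) (c c' : F), c ∈ K → c' ∈ K →
      g i * ((ζ : F) + c) = g j * ((ζ : F) + c') → i = j ∧ c = c' := by
    intro i j c c' hc hc' h
    have h' : g i * ζ + g i * c = g j * ζ + g j * c' := by ring_nf; linear_combination h
    obtain ⟨h1, h2⟩ := hindep _ _ _ _ (hgK i).1 (K.mul_mem (hgK i).1 hc) (hgK j).1
      (K.mul_mem (hgK j).1 hc') h'
    have hij : i = j := hginj h1
    refine ⟨hij, ?_⟩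
    rw [← h1] at h2
    exact mul_left_cancel₀ (hgK i).2 h2
  -- the construction
  show ContainsDGR (q - 1) q (Finset.Icc 1 (q ^ 2 - 1))
  refine ⟨fun i => Kfin.image (fun c => L (g i * ((ζ : F) + c))), fun i => ⟨?_, ?_, ?_⟩, ?_⟩
  · -- card
    rw [Finset.card_image_of_injOn, hcardKfin]
    intro c hc c' hc' h
    have hc1 := (hmemKfin c).mp hc
    have hc'1 := (hmemKfin c').mp hc'
    have heq := hLinj _ _ (helt i c hc1) (helt i c' hc'1) h
    exact (heltinj i i c c' hc1 hc'1 heq).2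
  · -- subset
    intro a ha
    obtain ⟨c, hc, rfl⟩ := Finset.mem_image.mp ha
    have hc1 := (hmemKfin c).mp hc
    have hb := (hLspec _ (helt i c hc1)).1
    rw [Finset.mem_Icc]
    exact ⟨hb.1, hb.2⟩
  · -- Golomb
    intro a ha b hb c hc d hd hab hcd habcd
    obtain ⟨c₁, hm1, rfl⟩ := Finset.mem_image.mp ha
    obtain ⟨c₂, hm2, rfl⟩ := Finset.mem_image.mp hb
    obtain ⟨c₃, hm3, rfl⟩ := Finset.mem_image.mp hc
    obtain ⟨c₄, hm4, rfl⟩ := Finset.mem_image.mp hd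
    have h1 := (hmemKfin c₁).mp hm1
    have h2 := (hmemKfin c₂).mp hm2
    have h3 := (hmemKfin c₃).mp hm3
    have h4 := (hmemKfin c₄).mp hm4
    have hx := hLmul _ _ _ _ (helt i c₁ h1) (helt i c₂ h2) (helt i c₃ h3) (helt i c₄ h4) habcd
    have hcc : c₁ ≠ c₂ := by
      intro h; exact hab (by rw [h])
    have hg2 : ((ζ : F) + c₁) * ((ζ : F) + c₄) = ((ζ : F) + c₂) * ((ζ : F) + c₃) := by
      apply mul_left_cancel₀ (mul_ne_zero (hgK i).2 (hgK i).2)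
      linear_combination hx
    have hsum_prod : (c₁ + c₄) * (ζ : F) + c₁ * c₄ = (c₂ + c₃) * (ζ : F) + c₂ * c₃ := by
      linear_combination hg2
    obtain ⟨hsum, hprod⟩ := hindep _ _ _ _ (K.add_mem h1 h4) (K.mul_mem h1 h4)
      (K.add_mem h2 h3) (K.mul_mem h2 h3) hsum_prod
    have hroot : (c₁ - c₂) * (c₁ - c₃) = 0 := by linear_combination c₁ * hsum - hprod
    rcases mul_eq_zero.mp hroot with h | h
    · exact absurd (sub_eq_zero.mp h) hcc
    · have h13 : c₁ = c₃ := sub_eq_zero.mp h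
      have h42 : c₄ = c₂ := by linear_combination hsum - h13
      exact ⟨by rw [h13], by rw [h42]⟩
  · -- disjoint
    intro i j hij
    rw [Finset.disjoint_left]
    intro a hai haj
    obtain ⟨c, hc, rfl⟩ := Finset.mem_image.mp hai
    obtain ⟨c', hc', h⟩ := Finset.mem_image.mp haj
    have hc1 := (hmemKfin c).mp hc
    have hc'1 := (hmemKfin c').mp hc'
    have heq := hLinj _ _ (helt j c' hc'1) (helt i c hc1) h
    exact hij ((heltinj i j c c' hc1 hc'1 heq.symm).1)

theorem H_primePow_pred_rulers (p : ℕ) (hp : IsPrimePow p) (h2 : 2 ≤ p) :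
    H (p - 1) p ≤ p ^ 2 - 1 := by
  obtain ⟨p0, m, hp0, hm, rfl⟩ := hp
  apply Nat.sInf_le
  refine ⟨?_, key_construction p0 m hp0.nat_prime hm⟩
  have h4 : 4 ≤ (p0 ^ m) ^ 2 := by nlinarith [h2]
  omega
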